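/- arXiv:1908.06250 — 2 statements merged into one kernel-verified Lean document; each statement's English description precedes it below -/
import Mathlib

section
/- Let G be any signed digraph that is strongly connected. Then the matrix (W·L + Lᵀ·W)/2 is a valid Laplacian matrix of the mirror signed graph of G; that is, (W·L + Lᵀ·W)/2 = Δ̂ − Â, where Â = (W·A + Aᵀ·W)/2 is the mirror adjacency matrix and Δ̂ = diag(Σ_j |â_1j|, …, Σ_j |â_nj|). In particular, for every i the i-th diagonal entry of (W·L + Lᵀ·W)/2 equals Σ_j |â_ij|, and for i ≠ j the (i,j) entry equals −â_ij. -/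
open Matrix BigOperators Filter

/-- In-degree of node `i`: sum of absolute values of the `i`-th row of `A`. -/
noncomputable def inDeg {n : ℕ} (A : Matrix (Fin n) (Fin n) ℝ) (i : Fin n) : ℝ := ∑ j, |A i j|

/-- Laplacian `L = Δ − A` of the signed digraph with adjacency matrix `A`. -/
noncomputable def lapOf {n : ℕ} (A : Matrix (Fin n) (Fin n) ℝ) : Matrix (Fin n) (Fin n) ℝ :=
  Matrix.diagonal (inDeg A) - A

/-- Laplacian `L̄ = Δ − Ā` of the induced unsigned digraph. -/
noncomputable def lapBar {n : ℕ} (A : Matrix (Fin n) (Fin n) ℝ) : Matrix (Fin n) (Fin n) ℝ :=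
  Matrix.diagonal (inDeg A) - Matrix.of (fun i j => |A i j|)

/-- `det(L̄_ii)`: determinant of `L̄` with its `i`-th row and column removed. -/
noncomputable def minorDet {n : ℕ} (A : Matrix (Fin n) (Fin n) ℝ) (i : Fin n) : ℝ :=
  Matrix.det ((lapBar A).submatrix (fun k : {j : Fin n // j ≠ i} => (k : Fin n))
    (fun k : {j : Fin n // j ≠ i} => (k : Fin n)))

/-- `W = diag(det(L̄_11), …, det(L̄_nn))`. -/
noncomputable def Wmat {n : ℕ} (A : Matrix (Fin n) (Fin n) ℝ) : Matrix (Fin n) (Fin n) ℝ :=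
  Matrix.diagonal (minorDet A)

/-- Mirror adjacency matrix `Â = (W·A + Aᵀ·W)/2`. -/
noncomputable def mirrorAdj {n : ℕ} (A : Matrix (Fin n) (Fin n) ℝ) : Matrix (Fin n) (Fin n) ℝ :=
  (1/2 : ℝ) • (Wmat A * A + Aᵀ * Wmat A)

/-- Mirror Laplacian `L̂ = (W·L + Lᵀ·W)/2`. -/
noncomputable def mirrorLap {n : ℕ} (A : Matrix (Fin n) (Fin n) ℝ) : Matrix (Fin n) (Fin n) ℝ :=
  (1/2 : ℝ) • (Wmat A * lapOf A + (lapOf A)ᵀ * Wmat A)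

/-- `(j, i)` is a directed edge when `a_ij ≠ 0`; strong connectivity: a directed
path between every ordered pair of distinct nodes. -/
def StronglyConnected {n : ℕ} (A : Matrix (Fin n) (Fin n) ℝ) : Prop :=
  ∀ i j : Fin n, i ≠ j → Relation.TransGen (fun u v => A v u ≠ 0) i j

/-- `σ` is the diagonal of a gauge transformation: each entry is `±1`. -/
def IsGauge {n : ℕ} (σ : Fin n → ℝ) : Prop := ∀ i, σ i = 1 ∨ σ i = -1

/-- Structural balance: there is a gauge transformation `D = diag σ` with all entries
of `D·A·D` (entrywise `σ i * A i j * σ j`) nonnegative. -/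
def StructBalanced {n : ℕ} (A : Matrix (Fin n) (Fin n) ℝ) : Prop :=
  ∃ σ : Fin n → ℝ, IsGauge σ ∧ ∀ i j, 0 ≤ σ i * A i j * σ j

/-- Improved Laplacian potential function
`Φ_e(x) = Σ_i Σ_j det(L̄_ii)·|a_ij|·(x_i − sgn(a_ij)·x_j)²`. -/
noncomputable def PhiE {n : ℕ} (A : Matrix (Fin n) (Fin n) ℝ) (x : Fin n → ℝ) : ℝ :=
  ∑ i, ∑ j, minorDet A i * |A i j| * (x i - Real.sign (A i j) * x j) ^ 2



open Polynomial in
lemma aux_eval_char {ι : Type*} [Fintype ι] [DecidableEq ι] (M : Matrix ι ι ℝ) (t : ℝ) :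
    ((-M).charpoly).eval t = ((Matrix.diagonal (fun _ => t)) + M).det := by
  rw [Matrix.charpoly, _root_.eval_det, matPolyEquiv_charmatrix]
  simp [sub_neg_eq_add]

lemma aux_det_nonneg {ι : Type*} [Fintype ι] [DecidableEq ι] [Nonempty ι]
    (M : Matrix ι ι ℝ) (hd : ∀ k, 0 ≤ M k k)
    (hdom : ∀ k, ∑ j ∈ Finset.univ.erase k, |M k j| ≤ M k k) : 0 ≤ M.det := by
  set p := (-M).charpoly with hp
  have hmon : p.Monic := Matrix.charpoly_monic _
  have hdeg : 0 < p.degree := by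
    rw [hp, Matrix.charpoly_degree_eq_dim]
    exact_mod_cast Fintype.card_pos
  have htend : Filter.Tendsto (fun t => p.eval t) atTop atTop :=
    p.tendsto_atTop_of_leadingCoeff_nonneg hdeg (by simp [hmon.leadingCoeff])
  have hne : ∀ t : ℝ, 0 < t → p.eval t ≠ 0 := by
    intro t ht
    rw [aux_eval_char]
    set N : Matrix ι ι ℝ := Matrix.diagonal (fun _ => t) + M with hN
    apply det_ne_zero_of_sum_row_lt_diag
    intro k
    have h1 : ∀ j ∈ Finset.univ.erase k, ‖N k j‖ = |M k j| := by
      intro j hj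
      have hjk : j ≠ k := Finset.ne_of_mem_erase hj
      simp [hN, Matrix.diagonal_apply_ne' _ hjk, Real.norm_eq_abs]
    rw [Finset.sum_congr rfl h1]
    have h2 : N k k = t + M k k := by simp [hN]
    rw [h2, Real.norm_eq_abs, abs_of_pos (by nlinarith [hd k])]
    nlinarith [hdom k]
  have hpos : ∀ t : ℝ, 0 < t → 0 < p.eval t := by
    by_contra hcon
    push_neg at hcon
    obtain ⟨t, ht, hle⟩ := hcon
    obtain ⟨T, hT, hTpos⟩ := ((htend.eventually_gt_atTop 0).and (Filter.eventually_gt_atTop t)).exists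
    have hsub := intermediate_value_Icc (le_of_lt hTpos) (p.continuous.continuousOn (s := Set.Icc t T))
    have h0 : (0:ℝ) ∈ Set.Icc (p.eval t) (p.eval T) := ⟨hle, le_of_lt hT⟩
    obtain ⟨z, hz, hz0⟩ := hsub h0
    exact hne z (lt_of_lt_of_le ht hz.1) hz0
  have hlim : Filter.Tendsto (fun t => p.eval t) (nhdsWithin 0 (Set.Ioi 0)) (nhds (p.eval 0)) :=
    (p.continuous.tendsto 0).mono_left nhdsWithin_le_nhds
  have h0le : 0 ≤ p.eval 0 := by
    refine ge_of_tendsto hlim ?_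
    filter_upwards [self_mem_nhdsWithin] with t ht
    exact le_of_lt (hpos t ht)
  have : p.eval 0 = M.det := by rw [aux_eval_char]; simp
  linarith


open Matrix BigOperators Filter

lemma lapBar_ker_const {n : ℕ} (hn : 2 ≤ n) (A : Matrix (Fin n) (Fin n) ℝ)
    (hsc : StronglyConnected A) (x : Fin n → ℝ) (hx : (lapBar A) *ᵥ x = 0) :
    ∀ i j, x i = x j := by
  have hpos : (0:ℕ) < n := by omega
  obtain ⟨i0, -, hmax⟩ := Finset.exists_max_image (Finset.univ : Finset (Fin n)) x
    ⟨⟨0, hpos⟩, Finset.mem_univ _⟩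
  have step : ∀ v, x v = x i0 → ∀ u, A v u ≠ 0 → x u = x i0 := by
    intro v hv u hu
    have hexp : ∑ j, |A v j| * (x v - x j) = 0 := by
      have h0 := congrFun hx v
      simp only [Matrix.mulVec, dotProduct, lapBar, Matrix.sub_apply,
        Matrix.diagonal_apply, Matrix.of_apply, sub_mul, Pi.zero_apply] at h0
      rw [Finset.sum_sub_distrib] at h0
      have l1 : ∑ j, (if v = j then inDeg A v else 0) * x j = ∑ j, |A v j| * x v := by
        rw [Finset.sum_eq_single v (fun b _ hb => by rw [if_neg (fun h => hb h.symm), zero_mul])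
          (by simp)]
        simp [inDeg, Finset.sum_mul]
      rw [l1] at h0
      rw [← h0, ← Finset.sum_sub_distrib]
      exact Finset.sum_congr rfl (fun j _ => by ring)
    have h3 : ∀ j ∈ Finset.univ, (0:ℝ) ≤ |A v j| * (x v - x j) := by
      intro j _
      have hj : x j ≤ x v := by rw [hv]; exact hmax j (Finset.mem_univ j)
      exact mul_nonneg (abs_nonneg _) (by linarith)
    have h4 := (Finset.sum_eq_zero_iff_of_nonneg h3).mp hexp u (Finset.mem_univ u)
    rcases mul_eq_zero.mp h4 with h | h
    · exact absurd (abs_eq_zero.mp h) hu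
    · have : x u = x v := by linarith
      rw [this, hv]
  have reach : ∀ j, Relation.TransGen (fun u v => A v u ≠ 0) j i0 → x j = x i0 := by
    intro j hpath
    induction hpath using Relation.TransGen.head_induction_on with
    | single h => exact step i0 rfl _ h
    | head h' _ ihc => exact step _ ihc _ h'
  have hall : ∀ i, x i = x i0 := by
    intro i
    by_cases hi : i = i0
    · rw [hi]
    · exact reach i (hsc i i0 hi)
  intro i j; rw [hall i, hall j]

lemma lapBar_mulVec_one' {n : ℕ} (A : Matrix (Fin n) (Fin n) ℝ) :
    (lapBar A) *ᵥ (fun _ => (1:ℝ)) = 0 := by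
  funext i
  simp only [Matrix.mulVec, dotProduct, mul_one, Pi.zero_apply]
  simp [lapBar, inDeg, Matrix.diagonal_apply, Finset.sum_sub_distrib, Finset.sum_ite_eq]

lemma lapBar_det_zero {n : ℕ} (hn : 2 ≤ n) (A : Matrix (Fin n) (Fin n) ℝ) :
    (lapBar A).det = 0 := by
  rw [← Matrix.exists_mulVec_eq_zero_iff]
  refine ⟨fun _ => 1, ?_, lapBar_mulVec_one' A⟩
  intro h
  have hp : (0:ℕ) < n := by omega
  have := congrFun h ⟨0, hp⟩
  simp at this

lemma adjugate_diag_eq_minorDet {n : ℕ} (A : Matrix (Fin n) (Fin n) ℝ) (j : Fin n) :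
    (lapBar A).adjugate j j = minorDet A j := by
  rw [Matrix.adjugate_apply]
  set M' := (lapBar A).updateRow j (Pi.single j 1) with hM'
  have hblk := Matrix.twoBlockTriangular_det M' (fun u => u ≠ j) (by
    intro u hu v hv
    have : u = j := not_not.mp hu
    subst this
    simp [hM', Matrix.updateRow_self, Pi.single_eq_of_ne hv])
  rw [hblk]
  have hsing : Subsingleton {a : Fin n // ¬ a ≠ j} :=
    ⟨fun a b => Subtype.ext (by
      have := not_not.mp a.2; have := not_not.mp b.2; simp_all)⟩
  have h2 : (Matrix.toSquareBlockProp M' (fun u => ¬ u ≠ j)).det = 1 := by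
    haveI := hsing
    rw [Matrix.det_eq_elem_of_subsingleton _ ⟨j, not_not_intro rfl⟩]
    simp [Matrix.toSquareBlockProp, Matrix.toBlock, hM']
  have h1 : (Matrix.toSquareBlockProp M' (fun u => u ≠ j)).det = minorDet A j := by
    unfold minorDet
    congr 1
    ext u v
    simp [Matrix.toSquareBlockProp, Matrix.toBlock, hM', Matrix.updateRow_ne u.2]
  rw [h1, h2, mul_one]

lemma adjugate_col_const {n : ℕ} (hn : 2 ≤ n) (A : Matrix (Fin n) (Fin n) ℝ)
    (hsc : StronglyConnected A) (k j : Fin n) :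
    (lapBar A).adjugate k j = minorDet A j := by
  have hmul : lapBar A * (lapBar A).adjugate = 0 := by
    rw [Matrix.mul_adjugate, lapBar_det_zero hn A, zero_smul]
  have hker : (lapBar A) *ᵥ (fun k => (lapBar A).adjugate k j) = 0 := by
    funext i
    have := congrFun (congrFun hmul i) j
    simpa [Matrix.mul_apply, Matrix.mulVec, dotProduct] using this
  have := lapBar_ker_const hn A hsc _ hker k j
  rw [this, adjugate_diag_eq_minorDet]

lemma w_lapBar_zero {n : ℕ} (hn : 2 ≤ n) (A : Matrix (Fin n) (Fin n) ℝ)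
    (hsc : StronglyConnected A) (j : Fin n) :
    ∑ k, minorDet A k * lapBar A k j = 0 := by
  have hmul : (lapBar A).adjugate * lapBar A = 0 := by
    rw [Matrix.adjugate_mul, lapBar_det_zero hn A, zero_smul]
  have := congrFun (congrFun hmul j) j
  simp only [Matrix.mul_apply, Matrix.zero_apply] at this
  rw [← this]
  exact Finset.sum_congr rfl (fun k _ => by rw [adjugate_col_const hn A hsc j k])

lemma key_balance {n : ℕ} (hn : 2 ≤ n) (A : Matrix (Fin n) (Fin n) ℝ)
    (hsc : StronglyConnected A) (j : Fin n) :
    ∑ k, minorDet A k * |A k j| = minorDet A j * inDeg A j := by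
  have h := w_lapBar_zero hn A hsc j
  simp only [lapBar, Matrix.sub_apply, Matrix.diagonal_apply, Matrix.of_apply,
    mul_sub] at h
  rw [Finset.sum_sub_distrib] at h
  have l1 : ∑ k, minorDet A k * (if k = j then inDeg A k else 0)
      = minorDet A j * inDeg A j := by
    rw [Finset.sum_eq_single j (fun b _ hb => by rw [if_neg hb, mul_zero]) (by simp)]
    rw [if_pos rfl]
  rw [l1] at h
  linarith

lemma abs_add_eq_of_mul_nonneg {x y : ℝ} (h : 0 ≤ x * y) : |x + y| = |x| + |y| := by
  rcases le_or_gt 0 x with hx | hx <;> rcases le_or_gt 0 y with hy | hy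
  · rw [abs_of_nonneg hx, abs_of_nonneg hy, abs_of_nonneg (by linarith)]
  · have hx0 : x = 0 := by nlinarith
    simp [hx0]
  · have hy0 : y = 0 := by nlinarith
    simp [hy0]
  · rw [abs_of_nonpos hx.le, abs_of_nonpos hy.le, abs_of_nonpos (by linarith)]
    ring

lemma minorDet_nonneg {n : ℕ} (hn : 2 ≤ n) (A : Matrix (Fin n) (Fin n) ℝ) (i : Fin n) :
    0 ≤ minorDet A i := by
  haveI : Nonempty {j : Fin n // j ≠ i} := by
    set a : Fin n := ⟨0, by omega⟩
    set b : Fin n := ⟨1, by omega⟩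
    have hab : a ≠ b := by simp [a, b, Fin.ext_iff]
    by_cases hia : i = a
    · exact ⟨⟨b, by rw [hia]; exact (Ne.symm hab)⟩⟩
    · exact ⟨⟨a, fun h => hia h.symm⟩⟩
  apply aux_det_nonneg
  · intro k
    have h1 : |A (k:Fin n) (k:Fin n)| ≤ inDeg A k :=
      Finset.single_le_sum (fun j _ => abs_nonneg (A (k:Fin n) j)) (Finset.mem_univ _)
    simp only [Matrix.submatrix_apply, lapBar, Matrix.sub_apply, Matrix.diagonal_apply,
      Matrix.of_apply, if_pos rfl, if_true]
    linarith
  · intro k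
    have hre : ∀ j ∈ (Finset.univ : Finset {j : Fin n // j ≠ i}).erase k,
        |((lapBar A).submatrix (fun k : {j : Fin n // j ≠ i} => (k : Fin n))
          (fun k : {j : Fin n // j ≠ i} => (k : Fin n))) k j| = |A (k:Fin n) (j:Fin n)| := by
      intro j hj
      have hjk : (j:Fin n) ≠ (k:Fin n) := fun h => (Finset.ne_of_mem_erase hj) (Subtype.ext h)
      simp only [Matrix.submatrix_apply, lapBar, Matrix.sub_apply, Matrix.diagonal_apply,
        Matrix.of_apply]
      rw [if_neg (fun h => hjk h.symm), zero_sub, abs_neg, abs_abs]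
    rw [Finset.sum_congr rfl hre]
    have hemb : Function.Injective (fun k : {j : Fin n // j ≠ i} => (k : Fin n)) :=
      Subtype.coe_injective
    have hmap : ∑ j ∈ (Finset.univ : Finset {j : Fin n // j ≠ i}).erase k,
        |A (k:Fin n) (j:Fin n)|
        = ∑ m ∈ ((Finset.univ : Finset {j : Fin n // j ≠ i}).erase k).map
            ⟨_, hemb⟩, |A (k:Fin n) m| := by
      rw [Finset.sum_map]
      rfl
    rw [hmap]
    have hsub : ((Finset.univ : Finset {j : Fin n // j ≠ i}).erase k).map ⟨_, hemb⟩
        ⊆ (Finset.univ : Finset (Fin n)).erase (k:Fin n) := by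
      intro m hm
      simp only [Finset.mem_map, Finset.mem_erase, Function.Embedding.coeFn_mk] at hm ⊢
      obtain ⟨j, hj, rfl⟩ := hm
      exact ⟨fun h => hj.1 (Subtype.ext h), Finset.mem_univ _⟩
    have hle := Finset.sum_le_sum_of_subset_of_nonneg hsub
      (fun m _ _ => abs_nonneg (A (k:Fin n) m))
    have heq : ∑ m ∈ (Finset.univ : Finset (Fin n)).erase (k:Fin n), |A (k:Fin n) m|
        = inDeg A k - |A (k:Fin n) (k:Fin n)| := by
      rw [Finset.sum_erase_eq_sub (Finset.mem_univ _)]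
      rfl
    have hdd : ((lapBar A).submatrix (fun k : {j : Fin n // j ≠ i} => (k : Fin n))
        (fun k : {j : Fin n // j ≠ i} => (k : Fin n))) k k
        = inDeg A k - |A (k:Fin n) (k:Fin n)| := by
      simp [lapBar, Matrix.diagonal_apply]
    rw [hdd]
    linarith [hle, heq.le, heq.ge]

lemma mirrorLap_apply {n : ℕ} (A : Matrix (Fin n) (Fin n) ℝ) (i j : Fin n) :
    mirrorLap A i j
      = (1/2 : ℝ) * (minorDet A i * lapOf A i j + lapOf A j i * minorDet A j) := by
  simp [mirrorLap, Wmat, Matrix.diagonal_mul, Matrix.mul_diagonal]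

lemma mirrorAdj_apply {n : ℕ} (A : Matrix (Fin n) (Fin n) ℝ) (i j : Fin n) :
    mirrorAdj A i j
      = (1/2 : ℝ) * (minorDet A i * A i j + A j i * minorDet A j) := by
  simp [mirrorAdj, Wmat, Matrix.diagonal_mul, Matrix.mul_diagonal]

/-- `(W·L + Lᵀ·W)/2` is a valid Laplacian matrix of the mirror signed graph. -/
theorem mirrorLap_is_laplacian_of_mirrorAdj (n : ℕ) (hn : 2 ≤ n)
    (A : Matrix (Fin n) (Fin n) ℝ)
    (hdiag : ∀ i, A i i = 0) (hdigon : ∀ i j, 0 ≤ A i j * A j i)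
    (hsc : StronglyConnected A) :
    mirrorLap A = Matrix.diagonal (fun i => ∑ j, |mirrorAdj A i j|) - mirrorAdj A ∧
    (∀ i, mirrorLap A i i = ∑ j, |mirrorAdj A i j|) ∧
    (∀ i j, i ≠ j → mirrorLap A i j = -(mirrorAdj A i j)) := by
  have hw : ∀ i, 0 ≤ minorDet A i := minorDet_nonneg hn A
  -- the sum of |mirrorAdj| over a row
  have hsum : ∀ i, ∑ j, |mirrorAdj A i j| = minorDet A i * inDeg A i := by
    intro i
    have hterm : ∀ j, |mirrorAdj A i j|
        = (1/2 : ℝ) * (minorDet A i * |A i j| + minorDet A j * |A j i|) := by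
      intro j
      rw [mirrorAdj_apply, abs_mul]
      have hxy : 0 ≤ (minorDet A i * A i j) * (A j i * minorDet A j) := by
        have := mul_nonneg (mul_nonneg (hw i) (hw j)) (hdigon i j)
        nlinarith
      rw [abs_add_eq_of_mul_nonneg hxy, abs_mul, abs_mul,
        abs_of_nonneg (hw i), abs_of_nonneg (hw j)]
      rw [abs_of_nonneg (by norm_num : (0:ℝ) ≤ 1/2)]
      ring
    rw [Finset.sum_congr rfl (fun j _ => hterm j)]
    rw [← Finset.mul_sum, Finset.sum_add_distrib, ← Finset.mul_sum]
    have hkey : ∑ j, minorDet A j * |A j i| = minorDet A i * inDeg A i :=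
      key_balance hn A hsc i
    rw [hkey]
    have : ∑ j, |A i j| = inDeg A i := rfl
    rw [this]
    ring
  -- diagonal entries of mirrorLap
  have hdiagL : ∀ i, mirrorLap A i i = minorDet A i * inDeg A i := by
    intro i
    rw [mirrorLap_apply]
    have : lapOf A i i = inDeg A i := by
      simp [lapOf, Matrix.diagonal_apply, hdiag i]
    rw [this]
    ring
  -- off-diagonal entries
  have hoff : ∀ i j, i ≠ j → mirrorLap A i j = -(mirrorAdj A i j) := by
    intro i j hij
    rw [mirrorLap_apply, mirrorAdj_apply]
    have h1 : lapOf A i j = -A i j := by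
      simp [lapOf, Matrix.diagonal_apply_ne _ hij]
    have h2 : lapOf A j i = -A j i := by
      simp [lapOf, Matrix.diagonal_apply_ne _ (Ne.symm hij)]
    rw [h1, h2]
    ring
  refine ⟨?_, fun i => by rw [hdiagL i, hsum i], hoff⟩
  ext i j
  by_cases hij : i = j
  · subst hij
    have hA : mirrorAdj A i i = 0 := by
      rw [mirrorAdj_apply, hdiag i]
      ring
    simp only [Matrix.sub_apply, Matrix.diagonal_apply_eq, hA, sub_zero]
    rw [hdiagL i, hsum i]
  · simp only [Matrix.sub_apply, Matrix.diagonal_apply_ne _ hij, zero_sub]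
    exact hoff i j hij
end

section
/- Let G be a strongly connected signed digraph with mirror adjacency matrix Â = [â_ij] = (W·A + Aᵀ·W)/2. Then for all i ≠ j, â_ij ≠ 0 if and only if a_ij ≠ 0 or a_ji ≠ 0; consequently the mirror signed graph of G is connected, i.e., the undirected graph on {1,…,n} that joins i and j whenever â_ij ≠ 0 is connected, and its edge set equals E ∪ Ẽ where E is the edge set of G and Ẽ consists of the reversals of the edges of G. -/
open Matrix BigOperators Filter

section Aux

variable {n : ℕ} (A : Matrix (Fin n) (Fin n) ℝ)

/-- The shifted reduced Laplacian has trivial kernel for every shift `t ≥ 0`. -/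
lemma shifted_kernel_trivial (hsc : StronglyConnected A) (i : Fin n)
    (t : ℝ) (ht : 0 ≤ t) (x : {j : Fin n // j ≠ i} → ℝ)
    (hx : (t • (1 : Matrix {j : Fin n // j ≠ i} {j : Fin n // j ≠ i} ℝ) +
      (lapBar A).submatrix (fun k : {j : Fin n // j ≠ i} => (k : Fin n))
        (fun k : {j : Fin n // j ≠ i} => (k : Fin n))).mulVec x = 0) : x = 0 := by
  by_contra hx0
  -- extension of `x` by zero at `i`
  set y : Fin n → ℝ := fun j => if h : j = i then 0 else x ⟨j, h⟩ with hy
  have hyi : y i = 0 := by simp [hy]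
  have hyx : ∀ (j : Fin n) (h : j ≠ i), y j = x ⟨j, h⟩ := by
    intro j h; simp [hy, h]
  -- the row equation
  have hrow : ∀ k : Fin n, k ≠ i →
      (t + inDeg A k) * y k = ∑ j, |A k j| * y j := by
    intro k hk
    have h0 := congrFun hx ⟨k, hk⟩
    rw [Matrix.mulVec, dotProduct] at h0
    have hterm : ∀ j' : {j : Fin n // j ≠ i},
        (t • (1 : Matrix {j : Fin n // j ≠ i} {j : Fin n // j ≠ i} ℝ) +
          (lapBar A).submatrix (fun k : {j : Fin n // j ≠ i} => (k : Fin n))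
            (fun k : {j : Fin n // j ≠ i} => (k : Fin n))) ⟨k, hk⟩ j' * x j' =
        ((if k = (j' : Fin n) then t + inDeg A k else 0) - |A k (j' : Fin n)|) * y j' := by
      intro j'
      have hxy : x j' = y (j' : Fin n) := by rw [hyx _ j'.2]
      rw [hxy]
      congr 1
      simp only [Matrix.add_apply, Matrix.smul_apply, Matrix.one_apply,
        Matrix.submatrix_apply, lapBar, Matrix.sub_apply, Matrix.diagonal_apply,
        Matrix.of_apply]
      have : (⟨k, hk⟩ : {j : Fin n // j ≠ i}) = j' ↔ k = (j' : Fin n) := by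
        constructor
        · intro h; exact congrArg Subtype.val h
        · intro h; exact Subtype.ext h
      by_cases h : k = (j' : Fin n) <;> simp [this, h] <;> ring
    simp only [Pi.zero_apply] at h0
    rw [Finset.sum_congr rfl (fun j' _ => hterm j')] at h0
    -- convert the subtype sum to a full sum
    have hsum : ∑ j' : {j : Fin n // j ≠ i},
        ((if k = (j' : Fin n) then t + inDeg A k else 0) - |A k (j' : Fin n)|) * y j' =
        ∑ j : Fin n, ((if k = j then t + inDeg A k else 0) - |A k j|) * y j := by
      rw [← Finset.sum_subtype (Finset.univ.erase i)
        (fun j => by simp [Finset.mem_erase])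
        (fun j => ((if k = j then t + inDeg A k else 0) - |A k j|) * y j)]
      rw [← Finset.sum_erase_add Finset.univ _ (Finset.mem_univ i)]
      simp [hyi]
    rw [hsum] at h0
    have hsplit : ∑ j : Fin n, ((if k = j then t + inDeg A k else 0) - |A k j|) * y j =
        (t + inDeg A k) * y k - ∑ j, |A k j| * y j := by
      have hpt : ∀ j : Fin n, ((if k = j then t + inDeg A k else 0) - |A k j|) * y j =
          (if k = j then (t + inDeg A k) * y j else 0) - |A k j| * y j := by
        intro j; split_ifs <;> ring
      rw [Finset.sum_congr rfl (fun j _ => hpt j), Finset.sum_sub_distrib,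
        Finset.sum_ite_eq Finset.univ k (fun j => (t + inDeg A k) * y j)]
      simp
    rw [hsplit] at h0
    linarith
  -- a maximizer of |y|
  obtain ⟨km, -, hkm⟩ := Finset.exists_max_image Finset.univ (fun j => |y j|)
    ⟨i, Finset.mem_univ i⟩
  set M : ℝ := |y km| with hM
  have hmax : ∀ j, |y j| ≤ M := fun j => hkm j (Finset.mem_univ j)
  have hMpos : 0 < M := by
    obtain ⟨j0, hj0⟩ := Function.ne_iff.mp hx0
    have : |y (j0 : Fin n)| = |x j0| := by rw [hyx _ j0.2]
    have h1 : 0 < |x j0| := abs_pos.mpr hj0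
    calc 0 < |x j0| := h1
    _ = |y (j0 : Fin n)| := this.symm
    _ ≤ M := hmax _
  have hdeg_nonneg : ∀ k, 0 ≤ inDeg A k :=
    fun k => Finset.sum_nonneg fun j _ => abs_nonneg _
  -- common estimate for rows achieving the max
  have hest : ∀ k : Fin n, |y k| = M → (t + inDeg A k) * M ≤ inDeg A k * M := by
    intro k hkM
    have hki : k ≠ i := by
      intro h; rw [h, hyi] at hkM; simp at hkM; exact hMpos.ne hkM
    have h1 := hrow k hki
    have h2 : (t + inDeg A k) * M = |∑ j, |A k j| * y j| := by
      rw [← h1, abs_mul, abs_of_nonneg (by linarith [hdeg_nonneg k] : (0:ℝ) ≤ t + inDeg A k), hkM]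
    have h3 : |∑ j, |A k j| * y j| ≤ ∑ j, |A k j| * |y j| := by
      refine (Finset.abs_sum_le_sum_abs _ _).trans ?_
      refine le_of_eq (Finset.sum_congr rfl fun j _ => ?_)
      rw [abs_mul, abs_abs]
    have h4 : ∑ j, |A k j| * |y j| ≤ ∑ j, |A k j| * M :=
      Finset.sum_le_sum fun j _ => mul_le_mul_of_nonneg_left (hmax j) (abs_nonneg _)
    have h5 : ∑ j, |A k j| * M = inDeg A k * M := by
      rw [← Finset.sum_mul]; rfl
    calc (t + inDeg A k) * M = |∑ j, |A k j| * y j| := h2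
      _ ≤ ∑ j, |A k j| * M := h3.trans h4
      _ = inDeg A k * M := h5
  -- hence t = 0
  have ht0 : t = 0 := by
    have := hest km rfl
    nlinarith
  -- closure of the max-set under in-neighbours
  have hclose : ∀ k : Fin n, |y k| = M → ∀ j, A k j ≠ 0 → |y j| = M := by
    intro k hkM j hAkj
    have hki : k ≠ i := by
      intro h; rw [h, hyi] at hkM; simp at hkM; exact hMpos.ne hkM
    have h1 := hrow k hki
    rw [ht0, zero_add] at h1
    have h2 : inDeg A k * M = |∑ j, |A k j| * y j| := by
      rw [← h1, abs_mul, abs_of_nonneg (hdeg_nonneg k), hkM]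
    have h3 : |∑ j, |A k j| * y j| ≤ ∑ j, |A k j| * |y j| := by
      refine (Finset.abs_sum_le_sum_abs _ _).trans ?_
      refine le_of_eq (Finset.sum_congr rfl fun j _ => ?_)
      rw [abs_mul, abs_abs]
    have h5 : ∑ j, |A k j| * M = inDeg A k * M := by
      rw [← Finset.sum_mul]; rfl
    have hle : ∀ j ∈ Finset.univ, |A k j| * |y j| ≤ |A k j| * M :=
      fun j _ => mul_le_mul_of_nonneg_left (hmax j) (abs_nonneg _)
    have heq : ∑ j, |A k j| * |y j| = ∑ j, |A k j| * M := by
      have hge : inDeg A k * M ≤ ∑ j, |A k j| * |y j| := h2.symm ▸ h2 ▸ (h2 ▸ h3)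
      have hge' : ∑ j, |A k j| * M ≤ ∑ j, |A k j| * |y j| := by
        rw [h5]; rw [h2]; exact h3
      exact le_antisymm (Finset.sum_le_sum hle) hge'
    have := (Finset.sum_eq_sum_iff_of_le hle).mp heq j (Finset.mem_univ j)
    exact mul_left_cancel₀ (abs_ne_zero.mpr hAkj) this
  -- trace the path from i back to the maximizer
  have hki : km ≠ i := by
    intro h
    have h0 : (0:ℝ) = M := by rw [hM, h, hyi]; simp
    exact hMpos.ne h0
  have htr : ∀ v : Fin n, Relation.TransGen (fun u v => A v u ≠ 0) i v →
      |y v| = M → |y i| = M := by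
    intro v h
    induction h with
    | single h => intro hv; exact hclose _ hv i h
    | tail _ h2 IH => intro hv; exact IH (hclose _ hv _ h2)
  have : |y i| = M := htr km (hsc i km (Ne.symm hki)) rfl
  rw [hyi] at this
  simp at this
  exact hMpos.ne this

/-- `det(L̄_ii) > 0` for a strongly connected digraph. -/
lemma minorDet_pos (hn : 2 ≤ n) (hsc : StronglyConnected A) (i : Fin n) :
    0 < minorDet A i := by
  classical
  set B : Matrix {j : Fin n // j ≠ i} {j : Fin n // j ≠ i} ℝ :=
    (lapBar A).submatrix (fun k : {j : Fin n // j ≠ i} => (k : Fin n))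
      (fun k : {j : Fin n // j ≠ i} => (k : Fin n)) with hB
  have hdet : ∀ t : ℝ, 0 ≤ t →
      (t • (1 : Matrix {j : Fin n // j ≠ i} {j : Fin n // j ≠ i} ℝ) + B).det ≠ 0 := by
    intro t ht h0
    obtain ⟨v, hv, hmv⟩ := Matrix.exists_mulVec_eq_zero_iff.mpr h0
    exact hv (shifted_kernel_trivial A hsc i t ht v hmv)
  -- `t ↦ det(t•1 + B)` is the characteristic polynomial of `-B`
  have hevalp : ∀ t : ℝ, ((-B).charpoly).eval t =
      (t • (1 : Matrix {j : Fin n // j ≠ i} {j : Fin n // j ≠ i} ℝ) + B).det := by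
    intro t
    rw [Matrix.charpoly]
    have h1 : Polynomial.eval t (Matrix.charmatrix (-B)).det =
        ((Matrix.charmatrix (-B)).map (Polynomial.evalRingHom t)).det := by
      have := RingHom.map_det (Polynomial.evalRingHom t) (Matrix.charmatrix (-B))
      simpa using this
    rw [h1]
    congr 1
    ext k j
    rw [Matrix.map_apply]
    by_cases h : k = j
    · subst h
      rw [Matrix.charmatrix_apply_eq]
      simp [Matrix.one_apply, Matrix.neg_apply, Matrix.add_apply, Matrix.smul_apply,
        sub_neg_eq_add]
    · rw [Matrix.charmatrix_apply_ne _ _ _ h]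
      simp [Matrix.one_apply, Matrix.neg_apply, Matrix.add_apply, Matrix.smul_apply, h]
  -- the subtype is nonempty
  have hne : Nonempty {j : Fin n // j ≠ i} := by
    obtain ⟨j, hj⟩ := Fintype.exists_ne_of_one_lt_card (by simp; omega) i
    exact ⟨⟨j, hj⟩⟩
  have hmonic : ((-B).charpoly).Monic := Matrix.charpoly_monic _
  have hnd : ((-B).charpoly).natDegree = Fintype.card {j : Fin n // j ≠ i} :=
    Matrix.charpoly_natDegree_eq_dim _
  have hcard : 0 < Fintype.card {j : Fin n // j ≠ i} := Fintype.card_pos_iff.mpr hne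
  have hdegpos : 0 < ((-B).charpoly).degree := by
    rw [Polynomial.degree_eq_natDegree hmonic.ne_zero, hnd]
    exact_mod_cast hcard
  have htend : Tendsto (fun t => ((-B).charpoly).eval t) atTop atTop :=
    Polynomial.tendsto_atTop_of_leadingCoeff_nonneg _ hdegpos
      (by rw [hmonic.leadingCoeff]; norm_num)
  obtain ⟨T, hT1, hT0⟩ := ((htend.eventually_ge_atTop 1).and (eventually_ge_atTop 0)).exists
  have heval0 : ((-B).charpoly).eval 0 = B.det := by rw [hevalp]; simp
  have hf0ne : B.det ≠ 0 := by
    have h := hdet 0 le_rfl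
    simpa using h
  have hmB : minorDet A i = B.det := rfl
  by_contra hle
  push_neg at hle
  have hf0 : B.det < 0 := lt_of_le_of_ne (hmB ▸ hle) hf0ne
  have hcont : ContinuousOn (fun t => ((-B).charpoly).eval t) (Set.Icc 0 T) :=
    (Polynomial.continuous _).continuousOn
  have h0mem : (0:ℝ) ∈ Set.Icc (((-B).charpoly).eval 0) (((-B).charpoly).eval T) := by
    constructor
    · rw [heval0]; exact hf0.le
    · linarith
  obtain ⟨c, hc, hceq⟩ := intermediate_value_Icc hT0 hcont h0mem
  have hceq' : Polynomial.eval c ((-B).charpoly) = 0 := hceq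
  rw [hevalp] at hceq'
  exact hdet c hc.1 hceq'


end Aux

/-- the mirror signed graph of a strongly connected signed digraph is
connected, and its edge set is `E ∪ Ẽ`. -/
theorem mirror_graph_connected (n : ℕ) (hn : 2 ≤ n)
    (A : Matrix (Fin n) (Fin n) ℝ)
    (hdiag : ∀ i, A i i = 0) (hdigon : ∀ i j, 0 ≤ A i j * A j i)
    (hsc : StronglyConnected A) :
    (∀ i j, i ≠ j → (mirrorAdj A i j ≠ 0 ↔ (A i j ≠ 0 ∨ A j i ≠ 0))) ∧
    (∀ i j : Fin n, Relation.ReflTransGen (fun u v => mirrorAdj A u v ≠ 0) i j) := by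
  have hw : ∀ i, 0 < minorDet A i := minorDet_pos A hn hsc
  have hentry : ∀ i j, mirrorAdj A i j =
      (1/2 : ℝ) * (minorDet A i * A i j + A j i * minorDet A j) := by
    intro i j
    simp [mirrorAdj, Wmat, Matrix.smul_apply, Matrix.add_apply,
      Matrix.diagonal_mul, Matrix.mul_diagonal, Matrix.transpose_apply]
  have hiff : ∀ i j, i ≠ j → (mirrorAdj A i j ≠ 0 ↔ (A i j ≠ 0 ∨ A j i ≠ 0)) := by
    intro i j hij
    rw [hentry]
    constructor
    · intro h
      by_contra hc
      push_neg at hc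
      rw [hc.1, hc.2] at h
      simp at h
    · intro h h0
      have hwi := hw i
      have hwj := hw j
      have hd := hdigon i j
      have h0' : minorDet A i * A i j + A j i * minorDet A j = 0 := by
        field_simp at h0
        linarith
      rcases h with ha | hb
      · have h2 : minorDet A i * A i j * A i j + A j i * minorDet A j * A i j = 0 := by
          have := congrArg (fun z => z * A i j) h0'
          simpa [add_mul] using this
        nlinarith [mul_pos hwi (mul_self_pos.mpr ha), mul_nonneg hwj.le hd]
      · have h2 : minorDet A i * A i j * A j i + A j i * minorDet A j * A j i = 0 := by
          have := congrArg (fun z => z * A j i) h0'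
          simpa [add_mul] using this
        nlinarith [mul_pos hwj (mul_self_pos.mpr hb), mul_nonneg hwi.le hd]
  refine ⟨hiff, fun i j => ?_⟩
  by_cases hij : i = j
  · subst hij; exact Relation.ReflTransGen.refl
  · refine (Relation.TransGen.mono ?_ i j (hsc i j hij)).to_reflTransGen
    intro u v huv
    have huvne : u ≠ v := by
      intro h; subst h; exact huv (hdiag u)
    exact (hiff u v huvne).mpr (Or.inr huv)
end
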